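/- If S₀ is a nonzero subspace of V such that L_k(S₀) is join irreducible in Θ_k, then M := MPI(L_k(S₀)) is an irreducible ground-state space: there do not exist k-local FF ground-state spaces G₁, G₂ with G₁ < M, G₂ < M (proper subspaces of M), and G₁ ⊔ G₂ = M. -/

import Mathlib

/-!
Setup: `n` particles with local dimensions `d : Fin n → ℕ`.
`V d` is the `n`-particle space of functions `(∀ i, Fin (d i)) → ℂ`.
For `J : Finset (Fin n)`, `PConfig d J` is the type of `J`-configurations and
`VJ d J` the corresponding space.  `merge`, `contrL` (the contraction `ψ ↦ ψ_b`),
the reduced space `red d J S`, the tuple `Lk d S`, the maximal pre-image `MPI`,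
and `k`-local frustration-free ground-state spaces are as in the paper.
-/

namespace GSS

variable {n : ℕ}

abbrev Config (d : Fin n → ℕ) : Type := ∀ i : Fin n, Fin (d i)

abbrev V (d : Fin n → ℕ) : Type := Config d → ℂ

abbrev PConfig (d : Fin n → ℕ) (J : Finset (Fin n)) : Type := ∀ i : J, Fin (d i.1)

abbrev VJ (d : Fin n → ℕ) (J : Finset (Fin n)) : Type := PConfig d J → ℂ

/-- The full configuration equal to `a` on `J` and to `b` on `Jᶜ`. -/
def merge (d : Fin n → ℕ) (J : Finset (Fin n)) (a : PConfig d J) (b : PConfig d Jᶜ) :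
    Config d := fun i =>
  if h : i ∈ J then a ⟨i, h⟩ else b ⟨i, Finset.mem_compl.mpr h⟩

/-- The contraction `ψ ↦ ψ_b`, as a linear map from `V d` to `VJ d J`. -/
def contrL (d : Fin n → ℕ) (J : Finset (Fin n)) (b : PConfig d Jᶜ) :
    V d →ₗ[ℂ] VJ d J where
  toFun ψ := fun a => ψ (merge d J a b)
  map_add' _ _ := rfl
  map_smul' _ _ := rfl

/-- The reduced space `red_J(S)`: the span of all contractions `ψ_b` with `ψ ∈ S`. -/
noncomputable def red (d : Fin n → ℕ) (J : Finset (Fin n)) (S : Submodule ℂ (V d)) :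
    Submodule ℂ (VJ d J) :=
  Submodule.span ℂ {φ | ∃ ψ ∈ S, ∃ b : PConfig d Jᶜ, φ = contrL d J b ψ}

/-- The `k`-reduced tuple `L_k(S) = (red_J(S))_J` (only the components with
`J.card = k` are relevant). -/
noncomputable def Lk (d : Fin n → ℕ) (S : Submodule ℂ (V d)) :
    ∀ J : Finset (Fin n), Submodule ℂ (VJ d J) :=
  fun J => red d J S

/-- The maximal pre-image of a tuple `η`:
`{ψ : ψ_b ∈ η_J for every k-element subset J and every Jᶜ-configuration b}`. -/
noncomputable def MPI (d : Fin n → ℕ) (k : ℕ) (η : ∀ J : Finset (Fin n), Submodule ℂ (VJ d J)) :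
    Submodule ℂ (V d) :=
  ⨅ (J : Finset (Fin n)) (_ : J.card = k) (b : PConfig d Jᶜ), (η J).comap (contrL d J b)

/-- `G` is a `k`-local frustration-free ground-state space: `G` is nonzero and is
cut out by a family of subspaces `W_J ≤ V_J` via the contraction conditions. -/
def IsFFGroundSpace (d : Fin n → ℕ) (k : ℕ) (G : Submodule ℂ (V d)) : Prop :=
  G ≠ ⊥ ∧ ∃ W : ∀ J : Finset (Fin n), Submodule ℂ (VJ d J),
    G = ⨅ (J : Finset (Fin n)) (_ : J.card = k) (b : PConfig d Jᶜ), (W J).comap (contrL d J b)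

end GSS

open GSS

/-- `L_k(S)` is join irreducible in `Θ_k`. -/
def JoinIrred {n : ℕ} (d : Fin n → ℕ) (k : ℕ) (S : Submodule ℂ (V d)) : Prop :=
  ∀ S₁ S₂ : Submodule ℂ (V d), S₁ ≠ ⊥ → S₂ ≠ ⊥ →
    (∀ J : Finset (Fin n), J.card = k → red d J S = red d J S₁ ⊔ red d J S₂) →
    (∀ J : Finset (Fin n), J.card = k → red d J S = red d J S₁) ∨
    (∀ J : Finset (Fin n), J.card = k → red d J S = red d J S₂)

section Aux

variable {n : ℕ} (d : Fin n → ℕ)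

lemma red_mono (J : Finset (Fin n)) {S T : Submodule ℂ (V d)} (h : S ≤ T) :
    red d J S ≤ red d J T := by
  apply Submodule.span_mono
  rintro φ ⟨ψ, hψ, b, hb⟩
  exact ⟨ψ, h hψ, b, hb⟩

lemma contr_mem_red (J : Finset (Fin n)) {S : Submodule ℂ (V d)} {ψ : V d} (hψ : ψ ∈ S)
    (b : PConfig d Jᶜ) : contrL d J b ψ ∈ red d J S :=
  Submodule.subset_span ⟨ψ, hψ, b, rfl⟩

lemma red_sup (J : Finset (Fin n)) (S₁ S₂ : Submodule ℂ (V d)) :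
    red d J (S₁ ⊔ S₂) = red d J S₁ ⊔ red d J S₂ := by
  apply le_antisymm
  · apply Submodule.span_le.mpr
    rintro φ ⟨ψ, hψ, b, rfl⟩
    obtain ⟨y, hy, z, hz, rfl⟩ := Submodule.mem_sup.mp hψ
    rw [map_add]
    exact Submodule.add_mem_sup (contr_mem_red d J hy b) (contr_mem_red d J hz b)
  · exact sup_le (red_mono d J le_sup_left) (red_mono d J le_sup_right)

lemma mem_iInf_form (k : ℕ) (W : ∀ J : Finset (Fin n), Submodule ℂ (VJ d J)) (ψ : V d) :
    ψ ∈ (⨅ (J : Finset (Fin n)) (_ : J.card = k) (b : PConfig d Jᶜ),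
      (W J).comap (contrL d J b)) ↔
    ∀ J : Finset (Fin n), J.card = k → ∀ b : PConfig d Jᶜ, contrL d J b ψ ∈ W J := by
  simp [Submodule.mem_iInf, Submodule.mem_comap]

lemma red_le_W (k : ℕ) (W : ∀ J : Finset (Fin n), Submodule ℂ (VJ d J))
    {G : Submodule ℂ (V d)}
    (hG : G = ⨅ (J : Finset (Fin n)) (_ : J.card = k) (b : PConfig d Jᶜ),
      (W J).comap (contrL d J b))
    (J : Finset (Fin n)) (hJ : J.card = k) : red d J G ≤ W J := by
  apply Submodule.span_le.mpr
  rintro φ ⟨ψ, hψ, b, rfl⟩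
  rw [hG, mem_iInf_form] at hψ
  exact hψ J hJ b

lemma self_le_MPI (k : ℕ) (S : Submodule ℂ (V d)) : S ≤ MPI d k (Lk d S) := by
  intro ψ hψ
  rw [MPI, mem_iInf_form]
  intro J _ b
  exact contr_mem_red d J hψ b

lemma red_MPI (k : ℕ) (S : Submodule ℂ (V d)) (J : Finset (Fin n)) (hJ : J.card = k) :
    red d J (MPI d k (Lk d S)) = red d J S := by
  refine le_antisymm ?_ (red_mono d J (self_le_MPI d k S))
  exact red_le_W d k (Lk d S) rfl J hJ

end Aux

/-- if `L_k(S₀)` is join irreducible in `Θ_k`, then `M = MPI(L_k(S₀))`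
is an irreducible ground-state space: it is a `k`-local FF ground-state space which
is not the sum of two proper subspaces that are themselves `k`-local FF
ground-state spaces. -/
theorem stmt15 (n : ℕ) (hn : 1 ≤ n) (d : Fin n → ℕ) (k : ℕ) (hk1 : 1 ≤ k) (hk2 : k ≤ n)
    (S₀ : Submodule ℂ (V d)) (hS₀ : S₀ ≠ ⊥) (hirr : JoinIrred d k S₀) :
    IsFFGroundSpace d k (MPI d k (Lk d S₀)) ∧
    ¬ ∃ G₁ G₂ : Submodule ℂ (V d), IsFFGroundSpace d k G₁ ∧ IsFFGroundSpace d k G₂ ∧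
      G₁ < MPI d k (Lk d S₀) ∧ G₂ < MPI d k (Lk d S₀) ∧
      G₁ ⊔ G₂ = MPI d k (Lk d S₀) := by
  have hS₀M : S₀ ≤ MPI d k (Lk d S₀) := self_le_MPI d k S₀
  have hMne : MPI d k (Lk d S₀) ≠ ⊥ := fun h => hS₀ (le_bot_iff.mp (h ▸ hS₀M))
  constructor
  · exact ⟨hMne, Lk d S₀, rfl⟩
  · rintro ⟨G₁, G₂, ⟨hG₁ne, W₁, hW₁⟩, ⟨hG₂ne, W₂, hW₂⟩, hlt₁, hlt₂, hsup⟩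
    have hred : ∀ J : Finset (Fin n), J.card = k →
        red d J S₀ = red d J G₁ ⊔ red d J G₂ := by
      intro J hJ
      rw [← red_sup, hsup, red_MPI d k S₀ J hJ]
    have key : ∀ (G : Submodule ℂ (V d)) (W : ∀ J, Submodule ℂ (VJ d J)),
        G = (⨅ (J : Finset (Fin n)) (_ : J.card = k) (b : PConfig d Jᶜ),
          (W J).comap (contrL d J b)) →
        (∀ J : Finset (Fin n), J.card = k → red d J S₀ = red d J G) →
        MPI d k (Lk d S₀) ≤ G := by
      intro G W hW hrG
      intro ψ hψ
      rw [MPI, mem_iInf_form] at hψ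
      rw [hW, mem_iInf_form]
      intro J hJ b
      exact red_le_W d k W hW J hJ ((hrG J hJ).symm ▸ hψ J hJ b)
    rcases hirr G₁ G₂ hG₁ne hG₂ne hred with h | h
    · exact absurd (key G₁ W₁ hW₁ h) (not_le_of_gt hlt₁)
    · exact absurd (key G₂ W₂ hW₂ h) (not_le_of_gt hlt₂)
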